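/- The maximal density for maximum degree 6 equals 4/5: (a) every S ⊆ ℤ² with N_S(x) ≤ 6 for all x ∈ S has upper density at most 4/5; and (b) the set S₀ = {x ∈ ℤ² : x₁ + 2x₂ ≢ 0 (mod 5)} satisfies N_{S₀}(x) ≤ 6 for all x ∈ S₀ and has density exactly 4/5. -/

import Mathlib

open Filter Topology
open Finset

/-- `y` is a neighbor of `x` in the 8-point (Moore) neighborhood of `ℤ²`. -/
def IsNbr (x y : ℤ × ℤ) : Prop :=
  y ≠ x ∧ |y.1 - x.1| ≤ 1 ∧ |y.2 - x.2| ≤ 1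

/-- `N_S(x)`: the number of neighbors of `x` lying in `S`. -/
noncomputable def nbrCount (S : Set (ℤ × ℤ)) (x : ℤ × ℤ) : ℕ :=
  Set.ncard {y ∈ S | IsNbr x y}

/-- The box `B_r = {x : |x₁| < r, |x₂| < r}`. -/
def box (r : ℕ) : Set (ℤ × ℤ) :=
  {x | |x.1| < (r : ℤ) ∧ |x.2| < (r : ℤ)}

/-- The upper density of `S ⊆ ℤ²`: `limsup_{r → ∞} |S ∩ B_r| / (2r-1)²`. -/
noncomputable def upperDensity (S : Set (ℤ × ℤ)) : ℝ :=
  limsup (fun r : ℕ => (Set.ncard (S ∩ box r) : ℝ) / (2 * (r : ℝ) - 1) ^ 2) atTop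

/-- `S` has density `d`: the sequence `|S ∩ B_r| / (2r-1)²` tends to `d`. -/
def HasDensity (S : Set (ℤ × ℤ)) (d : ℝ) : Prop :=
  Tendsto (fun r : ℕ => (Set.ncard (S ∩ box r) : ℝ) / (2 * (r : ℝ) - 1) ^ 2) atTop (𝓝 d)

/-! ### Auxiliary definitions and lemmas -/

def off8 : Finset (ℤ × ℤ) := {(-1,-1),(-1,0),(-1,1),(0,-1),(0,1),(1,-1),(1,0),(1,1)}

def nbrF (x : ℤ × ℤ) : Finset (ℤ × ℤ) := off8.image (fun d => (x.1 + d.1, x.2 + d.2))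

lemma mem_off8 {d : ℤ × ℤ} : d ∈ off8 ↔ d ≠ (0,0) ∧ |d.1| ≤ 1 ∧ |d.2| ≤ 1 := by
  obtain ⟨a, b⟩ := d
  simp only [off8, Finset.mem_insert, Finset.mem_singleton, Prod.mk.injEq, Ne, Prod.ext_iff,
    abs_le]
  omega

lemma mem_nbrF {x y : ℤ × ℤ} : y ∈ nbrF x ↔ IsNbr x y := by
  simp only [nbrF, Finset.mem_image]
  constructor
  · rintro ⟨d, hd, rfl⟩
    rw [mem_off8] at hd
    obtain ⟨h0, h1, h2⟩ := hd
    refine ⟨?_, by simpa using h1, by simpa using h2⟩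
    simp only [Ne, Prod.ext_iff] at h0 ⊢
    omega
  · rintro ⟨h0, h1, h2⟩
    refine ⟨(y.1 - x.1, y.2 - x.2), ?_, by simp⟩
    rw [mem_off8]
    simp only [Ne, Prod.ext_iff] at h0 ⊢
    constructor
    · omega
    · exact ⟨h1, h2⟩

lemma card_nbrF (x : ℤ × ℤ) : (nbrF x).card = 8 := by
  rw [nbrF, Finset.card_image_of_injective _ (fun a b h => by
    simp only [Prod.ext_iff] at h ⊢; omega)]
  decide

open scoped Classical in
lemma nbrCount_eq (S : Set (ℤ × ℤ)) (x : ℤ × ℤ) :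
    nbrCount S x = ((nbrF x).filter (· ∈ S)).card := by
  classical
  rw [nbrCount, ← Set.ncard_coe_finset]
  congr 1
  ext y
  simp [mem_nbrF, and_comm]

noncomputable def boxF (r : ℕ) : Finset (ℤ × ℤ) :=
  (Finset.Ico (1 - (r : ℤ)) (r : ℤ)) ×ˢ (Finset.Ico (1 - (r : ℤ)) (r : ℤ))

lemma mem_boxF {r : ℕ} {x : ℤ × ℤ} : x ∈ boxF r ↔ x ∈ _root_.box r := by
  rw [_root_.box, Set.mem_setOf_eq]
  simp only [boxF, Finset.mem_product, Finset.mem_Ico, abs_lt]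
  omega

open scoped Classical in
lemma ncard_inter (S : Set (ℤ × ℤ)) (r : ℕ) :
    Set.ncard (S ∩ _root_.box r) = ((boxF r).filter (· ∈ S)).card := by
  classical
  rw [← Set.ncard_coe_finset]
  congr 1
  ext y
  simp [mem_boxF.symm, and_comm]

lemma card_boxF (r : ℕ) : (boxF r).card = (2 * r - 1) ^ 2 := by
  rw [boxF, Finset.card_product, Int.card_Ico, sq]
  have : ((r : ℤ) - (1 - r)).toNat = 2 * r - 1 := by omega
  rw [this]

lemma isNbr_symm {x y : ℤ × ℤ} (h : IsNbr x y) : IsNbr y x := by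
  obtain ⟨h0, h1, h2⟩ := h
  exact ⟨by simpa [eq_comm] using h0.symm, by rw [abs_sub_comm]; exact h1,
    by rw [abs_sub_comm]; exact h2⟩

open scoped Classical in
lemma key_bound (S : Set (ℤ × ℤ)) (h : ∀ x ∈ S, nbrCount S x ≤ 6) (r : ℕ) :
    5 * ((boxF r).filter (· ∈ S)).card ≤ 4 * (2 * (r + 1) - 1) ^ 2 := by
  classical
  set A := (boxF r).filter (· ∈ S) with hA
  set C := (boxF (r + 1)).filter (· ∉ S) with hC
  have hnb : ∀ x ∈ boxF r, nbrF x ⊆ boxF (r + 1) := by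
    intro x hx y hy
    rw [mem_nbrF] at hy
    obtain ⟨_, h1, h2⟩ := hy
    simp only [boxF, Finset.mem_product, Finset.mem_Ico, abs_le] at hx ⊢
    push_cast
    rw [abs_le] at h1 h2
    omega
  have hlow : ∀ x ∈ A, 2 ≤ (C.filter (fun y => IsNbr x y)).card := by
    intro x hx
    rw [hA, Finset.mem_filter] at hx
    obtain ⟨hxb, hxS⟩ := hx
    have h8 := Finset.card_filter_add_card_filter_not (s := nbrF x) (p := (· ∈ S))
    rw [card_nbrF] at h8
    have h6 : ((nbrF x).filter (· ∈ S)).card ≤ 6 := by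
      rw [← nbrCount_eq]; exact h x hxS
    have h2 : 2 ≤ ((nbrF x).filter (· ∉ S)).card := by omega
    refine le_trans h2 (Finset.card_le_card ?_)
    intro y hy
    rw [Finset.mem_filter] at hy
    rw [hC, Finset.mem_filter, Finset.mem_filter]
    exact ⟨⟨hnb x hxb hy.1, hy.2⟩, mem_nbrF.mp hy.1⟩
  have hsum : ∑ x ∈ A, (C.filter (fun y => IsNbr x y)).card
      = ∑ y ∈ C, (A.filter (fun x => IsNbr y x)).card := by
    simp only [Finset.card_filter]
    rw [Finset.sum_comm]
    refine Finset.sum_congr rfl fun y _ => Finset.sum_congr rfl fun x _ => ?_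
    by_cases hxy : IsNbr x y
    · rw [if_pos hxy, if_pos (isNbr_symm hxy)]
    · rw [if_neg hxy, if_neg (fun hh => hxy (isNbr_symm hh))]
  have hup : ∀ y ∈ C, (A.filter (fun x => IsNbr y x)).card ≤ 8 := by
    intro y _
    calc (A.filter (fun x => IsNbr y x)).card ≤ (nbrF y).card := by
          apply Finset.card_le_card
          intro x hx
          rw [Finset.mem_filter] at hx
          exact mem_nbrF.mpr hx.2
      _ = 8 := card_nbrF y
  have hAC : A.card + C.card ≤ (2 * (r + 1) - 1) ^ 2 := by
    rw [← card_boxF (r + 1)]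
    have : A ⊆ (boxF (r + 1)).filter (· ∈ S) := by
      intro x hx
      rw [hA, Finset.mem_filter] at hx
      rw [Finset.mem_filter]
      refine ⟨?_, hx.2⟩
      revert hx
      simp only [boxF, Finset.mem_product, Finset.mem_Ico]
      push_cast
      omega
    calc A.card + C.card ≤ ((boxF (r+1)).filter (· ∈ S)).card + C.card :=
          Nat.add_le_add_right (Finset.card_le_card this) _
      _ = (boxF (r + 1)).card := by
          rw [hC, Finset.card_filter_add_card_filter_not]
  have e1 : 2 * A.card ≤ ∑ x ∈ A, (C.filter (fun y => IsNbr x y)).card := by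
    calc 2 * A.card = ∑ _x ∈ A, 2 := by rw [Finset.sum_const, smul_eq_mul, mul_comm]
      _ ≤ _ := Finset.sum_le_sum hlow
  have e2 : ∑ y ∈ C, (A.filter (fun x => IsNbr y x)).card ≤ 8 * C.card := by
    calc ∑ y ∈ C, (A.filter (fun x => IsNbr y x)).card ≤ ∑ _y ∈ C, 8 :=
          Finset.sum_le_sum hup
      _ = 8 * C.card := by rw [Finset.sum_const, smul_eq_mul, mul_comm]
  have : 2 * A.card ≤ 8 * C.card := by
    rw [hsum] at e1; exact le_trans e1 e2
  omega

lemma tendsto_lin_atTop (q : ℝ) : Tendsto (fun r : ℕ => 2 * (r : ℝ) + q) atTop atTop := by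
  apply tendsto_atTop_add_const_right
  exact (tendsto_natCast_atTop_atTop (R := ℝ)).const_mul_atTop (by norm_num)

lemma tendsto_ratio (p q : ℝ) :
    Tendsto (fun r : ℕ => (2 * (r : ℝ) + p) / (2 * (r : ℝ) + q)) atTop (𝓝 1) := by
  have h0 : Tendsto (fun r : ℕ => (p - q) / (2 * (r : ℝ) + q)) atTop (𝓝 0) :=
    Tendsto.div_atTop tendsto_const_nhds (tendsto_lin_atTop q)
  have h1 : Tendsto (fun r : ℕ => 1 + (p - q) / (2 * (r : ℝ) + q)) atTop (𝓝 1) := by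
    simpa using tendsto_const_nhds.add h0
  apply h1.congr'
  filter_upwards [(tendsto_lin_atTop q).eventually_gt_atTop 0] with r hr
  field_simp
  ring

lemma part_a (S : Set (ℤ × ℤ)) (h : ∀ x ∈ S, nbrCount S x ≤ 6) :
    upperDensity S ≤ 4 / 5 := by
  classical
  set f := fun r : ℕ => (Set.ncard (S ∩ _root_.box r) : ℝ) / (2 * (r : ℝ) - 1) ^ 2 with hf
  set g := fun r : ℕ => 4 / 5 * ((2 * (r : ℝ) + 1) / (2 * (r : ℝ) + -1)) ^ 2 with hg
  have hglim : Tendsto g atTop (𝓝 (4 / 5)) := by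
    have := ((tendsto_ratio 1 (-1)).pow 2).const_mul (4 / 5 : ℝ)
    simpa using this
  have hfg : ∀ᶠ r in atTop, f r ≤ g r := by
    filter_upwards [eventually_ge_atTop 1] with r hr
    have hkey := key_bound S h r
    rw [show 2 * (r + 1) - 1 = 2 * r + 1 by omega] at hkey
    have hr1 : (1 : ℝ) ≤ (r : ℝ) := by exact_mod_cast hr
    have hden : (0 : ℝ) < (2 * (r : ℝ) - 1) ^ 2 := by nlinarith
    rw [hf, hg]
    simp only []
    rw [div_le_iff₀ hden, ncard_inter]
    have hc : (((boxF r).filter (· ∈ S)).card : ℝ) ≤ 4 / 5 * (2 * (r : ℝ) + 1) ^ 2 := by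
      have : ((5 * ((boxF r).filter (· ∈ S)).card : ℕ) : ℝ)
          ≤ ((4 * (2 * r + 1) ^ 2 : ℕ) : ℝ) := by exact_mod_cast hkey
      push_cast at this
      linarith
    have hne : (2 * (r : ℝ) + -1) ≠ 0 := by intro hc; nlinarith
    calc (((boxF r).filter (· ∈ S)).card : ℝ) ≤ 4 / 5 * (2 * (r : ℝ) + 1) ^ 2 := hc
      _ = 4 / 5 * ((2 * (r : ℝ) + 1) / (2 * (r : ℝ) + -1)) ^ 2 * (2 * (r : ℝ) - 1) ^ 2 := by
          field_simp
          ring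
  have hcob : IsCoboundedUnder (· ≤ ·) atTop f :=
    isCoboundedUnder_le_of_le atTop (x := 0) (fun r => by positivity)
  calc upperDensity S = limsup f atTop := rfl
    _ ≤ limsup g atTop := limsup_le_limsup hfg hcob hglim.isBoundedUnder_le
    _ = 4 / 5 := hglim.limsup_eq

lemma part_b1 : ∀ x ∈ {x : ℤ × ℤ | ¬ x.1 + 2 * x.2 ≡ 0 [ZMOD 5]},
    nbrCount {x : ℤ × ℤ | ¬ x.1 + 2 * x.2 ≡ 0 [ZMOD 5]} x ≤ 6 := by
  classical
  intro x hx
  set S₀ : Set (ℤ × ℤ) := {x : ℤ × ℤ | ¬ x.1 + 2 * x.2 ≡ 0 [ZMOD 5]} with hS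
  have hx' : ¬ (x.1 + 2 * x.2) % 5 = 0 % 5 := hx
  obtain ⟨d, e, hde, hd1, hd2, he1, he2, hd0, he0, hdm, hem⟩ :
      ∃ d e : ℤ × ℤ, d ≠ e ∧ |d.1| ≤ 1 ∧ |d.2| ≤ 1 ∧ |e.1| ≤ 1 ∧ |e.2| ≤ 1 ∧
        d ≠ (0, 0) ∧ e ≠ (0, 0) ∧
        (x.1 + d.1 + 2 * (x.2 + d.2)) % 5 = 0 ∧ (x.1 + e.1 + 2 * (x.2 + e.2)) % 5 = 0 := by
    have h5 : (x.1 + 2 * x.2) % 5 = 1 ∨ (x.1 + 2 * x.2) % 5 = 2 ∨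
        (x.1 + 2 * x.2) % 5 = 3 ∨ (x.1 + 2 * x.2) % 5 = 4 := by omega
    rcases h5 with h | h | h | h
    · exact ⟨(1, -1), (-1, 0), by decide, by norm_num, by norm_num, by norm_num, by norm_num,
        by decide, by decide, by omega, by omega⟩
    · exact ⟨(1, 1), (0, -1), by decide, by norm_num, by norm_num, by norm_num, by norm_num,
        by decide, by decide, by omega, by omega⟩
    · exact ⟨(0, 1), (-1, -1), by decide, by norm_num, by norm_num, by norm_num, by norm_num,
        by decide, by decide, by omega, by omega⟩
    · exact ⟨(1, 0), (-1, 1), by decide, by norm_num, by norm_num, by norm_num, by norm_num,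
        by decide, by decide, by omega, by omega⟩
  set y₁ : ℤ × ℤ := (x.1 + d.1, x.2 + d.2) with hy1
  set y₂ : ℤ × ℤ := (x.1 + e.1, x.2 + e.2) with hy2
  have hy1n : y₁ ∈ nbrF x := by
    rw [mem_nbrF]
    refine ⟨?_, by simpa [hy1] using hd1, by simpa [hy1] using hd2⟩
    simp only [hy1, Ne, Prod.ext_iff] at hd0 ⊢
    omega
  have hy2n : y₂ ∈ nbrF x := by
    rw [mem_nbrF]
    refine ⟨?_, by simpa [hy2] using he1, by simpa [hy2] using he2⟩
    simp only [hy2, Ne, Prod.ext_iff] at he0 ⊢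
    omega
  have hy1S : y₁ ∉ S₀ := by
    rw [hy1, hS]
    simp only [Set.mem_setOf_eq, not_not]
    show _ % 5 = 0 % 5
    omega
  have hy2S : y₂ ∉ S₀ := by
    rw [hy2, hS]
    simp only [Set.mem_setOf_eq, not_not]
    show _ % 5 = 0 % 5
    omega
  have hyne : y₁ ≠ y₂ := by
    simp only [hy1, hy2, Ne, Prod.ext_iff] at hde ⊢
    intro hc
    apply hde
    constructor <;> omega
  have hsub : {y ∈ S₀ | IsNbr x y} ⊆ ↑(nbrF x \ ({y₁, y₂} : Finset (ℤ × ℤ))) := by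
    intro y hy
    obtain ⟨hyS, hyN⟩ := hy
    simp only [Finset.coe_sdiff, Set.mem_diff, Finset.coe_insert, Finset.coe_singleton,
      Set.mem_insert_iff, Set.mem_singleton_iff, Finset.mem_coe]
    refine ⟨mem_nbrF.mpr hyN, ?_⟩
    rintro (rfl | rfl)
    · exact hy1S hyS
    · exact hy2S hyS
  have hle : nbrCount S₀ x ≤ (nbrF x \ ({y₁, y₂} : Finset (ℤ × ℤ))).card := by
    rw [nbrCount, ← Set.ncard_coe_finset]
    exact Set.ncard_le_ncard hsub (Finset.finite_toSet _)
  refine le_trans hle ?_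
  have hTsub : ({y₁, y₂} : Finset (ℤ × ℤ)) ⊆ nbrF x := by
    intro y hy
    simp only [Finset.mem_insert, Finset.mem_singleton] at hy
    rcases hy with rfl | rfl
    · exact hy1n
    · exact hy2n
  rw [Finset.card_sdiff_of_subset hTsub, card_nbrF,
    Finset.card_insert_of_notMem (by simpa using hyne), Finset.card_singleton]

lemma row_bound (A B v : ℤ) (hAB : A ≤ B) :
    B - A - 4 ≤ 5 * (((Finset.Ico A B).filter (· ≡ v [ZMOD 5])).card : ℤ) ∧
    5 * (((Finset.Ico A B).filter (· ≡ v [ZMOD 5])).card : ℤ) ≤ B - A + 4 := by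
  have hc := Int.Ico_filter_modEq_card A B (r := 5) (by norm_num) v
  set cB := (⌈((B : ℚ) - v) / ((5 : ℤ) : ℚ)⌉) with hcB
  set cA := (⌈((A : ℚ) - v) / ((5 : ℤ) : ℚ)⌉) with hcA
  have h1 : ((B : ℚ) - v) / 5 ≤ cB := by rw [hcB]; push_cast; exact Int.le_ceil _
  have h2 : (cB : ℚ) < ((B : ℚ) - v) / 5 + 1 := by
    rw [hcB]; push_cast; exact Int.ceil_lt_add_one _
  have h3 : ((A : ℚ) - v) / 5 ≤ cA := by rw [hcA]; push_cast; exact Int.le_ceil _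
  have h4 : (cA : ℚ) < ((A : ℚ) - v) / 5 + 1 := by
    rw [hcA]; push_cast; exact Int.ceil_lt_add_one _
  have hdiff : B - A - 5 < 5 * (cB - cA) ∧ 5 * (cB - cA) < B - A + 5 := by
    constructor <;>
    · qify
      nlinarith [h1, h2, h3, h4]
  rcases le_or_gt (cB - cA) 0 with h | h
  · rw [max_eq_right h] at hc
    rw [hc]
    omega
  · rw [max_eq_left h.le] at hc
    rw [hc]
    omega

lemma bad_count (r : ℕ) (hr : 1 ≤ r) :
    (2 * (r : ℤ) - 1) * (2 * (r : ℤ) - 5) ≤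
      5 * (((boxF r).filter (fun p => p.1 + 2 * p.2 ≡ 0 [ZMOD 5])).card : ℤ) ∧
    5 * (((boxF r).filter (fun p => p.1 + 2 * p.2 ≡ 0 [ZMOD 5])).card : ℤ) ≤
      (2 * (r : ℤ) - 1) * (2 * (r : ℤ) + 3) := by
  have hsum : ((boxF r).filter (fun p => p.1 + 2 * p.2 ≡ 0 [ZMOD 5])).card
      = ∑ a ∈ Finset.Ico (1 - (r : ℤ)) (r : ℤ),
          ((Finset.Ico (1 - (r : ℤ)) (r : ℤ)).filter (· ≡ 2 * a [ZMOD 5])).card := by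
    rw [boxF, Finset.card_filter, Finset.sum_product]
    refine Finset.sum_congr rfl fun a _ => ?_
    rw [Finset.card_filter]
    refine Finset.sum_congr rfl fun b _ => ?_
    exact if_congr
      (by show (a + 2 * b) % 5 = 0 % 5 ↔ b % 5 = (2 * a) % 5; omega) rfl rfl
  have hcard : (Finset.Ico (1 - (r : ℤ)) (r : ℤ)).card = 2 * r - 1 := by
    rw [Int.card_Ico]; omega
  have hAB : (1 : ℤ) - (r : ℤ) ≤ (r : ℤ) := by
    have : (1 : ℤ) ≤ (r : ℤ) := by exact_mod_cast hr
    omega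
  constructor
  · rw [hsum]
    push_cast
    calc (2 * (r : ℤ) - 1) * (2 * (r : ℤ) - 5)
        = ∑ _a ∈ Finset.Ico (1 - (r : ℤ)) (r : ℤ), (2 * (r : ℤ) - 5) := by
          rw [Finset.sum_const, hcard, nsmul_eq_mul,
            show ((2 * r - 1 : ℕ) : ℤ) = 2 * (r : ℤ) - 1 by omega]
      _ ≤ ∑ a ∈ Finset.Ico (1 - (r : ℤ)) (r : ℤ),
            5 * (((Finset.Ico (1 - (r : ℤ)) (r : ℤ)).filter (· ≡ 2 * a [ZMOD 5])).card : ℤ) := by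
          refine Finset.sum_le_sum fun a _ => ?_
          have := (row_bound (1 - (r : ℤ)) (r : ℤ) (2 * a) hAB).1
          omega
      _ = 5 * ∑ a ∈ Finset.Ico (1 - (r : ℤ)) (r : ℤ),
            (((Finset.Ico (1 - (r : ℤ)) (r : ℤ)).filter (· ≡ 2 * a [ZMOD 5])).card : ℤ) := by
          rw [Finset.mul_sum]
  · rw [hsum]
    push_cast
    calc 5 * ∑ a ∈ Finset.Ico (1 - (r : ℤ)) (r : ℤ),
            (((Finset.Ico (1 - (r : ℤ)) (r : ℤ)).filter (· ≡ 2 * a [ZMOD 5])).card : ℤ)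
        = ∑ a ∈ Finset.Ico (1 - (r : ℤ)) (r : ℤ),
            5 * (((Finset.Ico (1 - (r : ℤ)) (r : ℤ)).filter (· ≡ 2 * a [ZMOD 5])).card : ℤ) := by
          rw [Finset.mul_sum]
      _ ≤ ∑ _a ∈ Finset.Ico (1 - (r : ℤ)) (r : ℤ), (2 * (r : ℤ) + 3) := by
          refine Finset.sum_le_sum fun a _ => ?_
          have := (row_bound (1 - (r : ℤ)) (r : ℤ) (2 * a) hAB).2
          omega
      _ = (2 * (r : ℤ) - 1) * (2 * (r : ℤ) + 3) := by
          rw [Finset.sum_const, hcard, nsmul_eq_mul,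
            show ((2 * r - 1 : ℕ) : ℤ) = 2 * (r : ℤ) - 1 by omega]

lemma good_split (r : ℕ) :
    Set.ncard ({x : ℤ × ℤ | ¬ x.1 + 2 * x.2 ≡ 0 [ZMOD 5]} ∩ _root_.box r)
      + ((boxF r).filter (fun p => p.1 + 2 * p.2 ≡ 0 [ZMOD 5])).card = (2 * r - 1) ^ 2 := by
  have h1 : Set.ncard ({x : ℤ × ℤ | ¬ x.1 + 2 * x.2 ≡ 0 [ZMOD 5]} ∩ _root_.box r)
      = ((boxF r).filter (fun p => ¬ p.1 + 2 * p.2 ≡ 0 [ZMOD 5])).card := by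
    rw [← Set.ncard_coe_finset]
    congr 1
    ext y
    simp only [Finset.coe_filter, Set.mem_setOf_eq, Set.mem_inter_iff, Finset.mem_coe, mem_boxF]
    tauto
  rw [h1, ← card_boxF r]
  have := Finset.card_filter_add_card_filter_not
    (s := boxF r) (p := fun p : ℤ × ℤ => p.1 + 2 * p.2 ≡ 0 [ZMOD 5])
  omega

lemma part_b2 : HasDensity {x : ℤ × ℤ | ¬ x.1 + 2 * x.2 ≡ 0 [ZMOD 5]} (4 / 5) := by
  rw [HasDensity]
  have hlo : Tendsto (fun r : ℕ => 4 / 5 * ((2 * (r : ℝ) + -2) / (2 * (r : ℝ) + -1)))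
      atTop (𝓝 (4 / 5)) := by
    simpa using (tendsto_ratio (-2) (-1)).const_mul (4 / 5 : ℝ)
  have hhi : Tendsto (fun r : ℕ => 4 / 5 * ((2 * (r : ℝ) + 0) / (2 * (r : ℝ) + -1)))
      atTop (𝓝 (4 / 5)) := by
    simpa using (tendsto_ratio 0 (-1)).const_mul (4 / 5 : ℝ)
  refine tendsto_of_tendsto_of_tendsto_of_le_of_le' hlo hhi ?_ ?_
  all_goals
    filter_upwards [eventually_ge_atTop 1] with r hr
    have hr1 : (1 : ℝ) ≤ (r : ℝ) := by exact_mod_cast hr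
    have hsplit := good_split r
    obtain ⟨hb1, hb2⟩ := bad_count r hr
    set a := Set.ncard ({x : ℤ × ℤ | ¬ x.1 + 2 * x.2 ≡ 0 [ZMOD 5]} ∩ _root_.box r) with ha
    set b := ((boxF r).filter (fun p => p.1 + 2 * p.2 ≡ 0 [ZMOD 5])).card with hb
    have hsq : ((2 * r - 1 : ℕ) : ℤ) = 2 * (r : ℤ) - 1 := by omega
    have hZ : (a : ℤ) + (b : ℤ) = (2 * (r : ℤ) - 1) ^ 2 := by
      have := congrArg (fun n : ℕ => (n : ℤ)) hsplit
      push_cast at this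
      rw [hsq] at this
      exact_mod_cast this
    have hL : (0 : ℝ) < 2 * (r : ℝ) - 1 := by linarith
    have hL2 : (0 : ℝ) < (2 * (r : ℝ) - 1) ^ 2 := by positivity
    have haR : (a : ℝ) + (b : ℝ) = (2 * (r : ℝ) - 1) ^ 2 := by exact_mod_cast hZ
    have hb1R : (2 * (r : ℝ) - 1) * (2 * (r : ℝ) - 5) ≤ 5 * (b : ℝ) := by exact_mod_cast hb1
    have hb2R : 5 * (b : ℝ) ≤ (2 * (r : ℝ) - 1) * (2 * (r : ℝ) + 3) := by exact_mod_cast hb2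
  · rw [le_div_iff₀ hL2]
    have key : 4 / 5 * ((2 * (r : ℝ) + -2) / (2 * (r : ℝ) + -1)) * (2 * (r : ℝ) - 1) ^ 2
        = (2 * (r : ℝ) - 1) * (8 * (r : ℝ) - 8) / 5 := by
      have hne : 2 * (r : ℝ) + -1 ≠ 0 := by linarith
      field_simp
      ring
    rw [key]
    linarith
  · rw [div_le_iff₀ hL2]
    have key : 4 / 5 * ((2 * (r : ℝ) + 0) / (2 * (r : ℝ) + -1)) * (2 * (r : ℝ) - 1) ^ 2
        = (2 * (r : ℝ) - 1) * (8 * (r : ℝ)) / 5 := by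
      have hne : 2 * (r : ℝ) + -1 ≠ 0 := by linarith
      field_simp
      ring
    rw [key]
    linarith

theorem maxDensity_degree_six :
    (∀ S : Set (ℤ × ℤ), (∀ x ∈ S, nbrCount S x ≤ 6) → upperDensity S ≤ 4 / 5) ∧
    ((∀ x ∈ {x : ℤ × ℤ | ¬ x.1 + 2 * x.2 ≡ 0 [ZMOD 5]},
        nbrCount {x : ℤ × ℤ | ¬ x.1 + 2 * x.2 ≡ 0 [ZMOD 5]} x ≤ 6) ∧
      HasDensity {x : ℤ × ℤ | ¬ x.1 + 2 * x.2 ≡ 0 [ZMOD 5]} (4 / 5)) := by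
  exact ⟨part_a, part_b1, part_b2⟩
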